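/- Let u = (u₁,u₂) be a global C^∞ solution of the system. Then for every σ ∈ ℝ, ω ∈ S¹ and t > 0 with t + σ > 0, the profile equations hold exactly: ∂ₜV₁(t;σ,ω) = −(1/(2t))V₁(t;σ,ω)V₂(t;σ,ω)² + K₁(t;σ,ω) and ∂ₜV₂(t;σ,ω) = −(1/(2t))V₁(t;σ,ω)²V₂(t;σ,ω) + K₂(t;σ,ω), where ∂ₜV_j(t;σ,ω) denotes the derivative of t ↦ V_j(t;σ,ω). -/

import Mathlib

open Real MeasureTheory Filter Topology

noncomputable section

/-- Partial derivative in `t`. -/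
def pt (u : ℝ → ℝ → ℝ → ℝ) : ℝ → ℝ → ℝ → ℝ :=
  fun t x1 x2 => deriv (fun s => u s x1 x2) t

/-- Partial derivative in `x₁`. -/
def p1 (u : ℝ → ℝ → ℝ → ℝ) : ℝ → ℝ → ℝ → ℝ :=
  fun t x1 x2 => deriv (fun y => u t y x2) x1

/-- Partial derivative in `x₂`. -/
def p2 (u : ℝ → ℝ → ℝ → ℝ) : ℝ → ℝ → ℝ → ℝ :=
  fun t x1 x2 => deriv (fun y => u t x1 y) x2

/-- The d'Alembertian `□ = ∂ₜ² − ∂₁² − ∂₂²`. -/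
def dAlembert (u : ℝ → ℝ → ℝ → ℝ) : ℝ → ℝ → ℝ → ℝ :=
  fun t x1 x2 => pt (pt u) t x1 x2 - p1 (p1 u) t x1 x2 - p2 (p2 u) t x1 x2

/-- `u : ℝ×ℝ² → ℝ` (curried) is C^∞. -/
def Smooth3 (u : ℝ → ℝ → ℝ → ℝ) : Prop :=
  ContDiff ℝ (⊤ : ℕ∞) (fun p : ℝ × ℝ × ℝ => u p.1 p.2.1 p.2.2)

/-- Compactly supported C^∞ function on ℝ². -/
def SmoothCompact2 (f : ℝ → ℝ → ℝ) : Prop :=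
  ContDiff ℝ (⊤ : ℕ∞) (fun p : ℝ × ℝ => f p.1 p.2) ∧
    HasCompactSupport (fun p : ℝ × ℝ => f p.1 p.2)

/-- Global C^∞ solution of the Cauchy problem
`□u₁ = −(∂ₜu₂)²∂ₜu₁`, `□u₂ = −(∂ₜu₁)²∂ₜu₂` with data `(εf_j, εg_j)`. -/
structure IsSolution (ε : ℝ) (f1 f2 g1 g2 : ℝ → ℝ → ℝ)
    (u1 u2 : ℝ → ℝ → ℝ → ℝ) : Prop where
  smooth1 : Smooth3 u1
  smooth2 : Smooth3 u2
  pde1 : ∀ t x1 x2 : ℝ, 0 < t →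
    dAlembert u1 t x1 x2 = -(pt u2 t x1 x2) ^ 2 * pt u1 t x1 x2
  pde2 : ∀ t x1 x2 : ℝ, 0 < t →
    dAlembert u2 t x1 x2 = -(pt u1 t x1 x2) ^ 2 * pt u2 t x1 x2
  init1 : ∀ x1 x2 : ℝ, u1 0 x1 x2 = ε * f1 x1 x2
  init2 : ∀ x1 x2 : ℝ, u2 0 x1 x2 = ε * f2 x1 x2
  initd1 : ∀ x1 x2 : ℝ, pt u1 0 x1 x2 = ε * g1 x1 x2
  initd2 : ∀ x1 x2 : ℝ, pt u2 0 x1 x2 = ε * g2 x1 x2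

/-- `‖u(t)‖_E²  = ½∫ ((∂ₜu)² + (∂₁u)² + (∂₂u)²) dx`. -/
def energySq (u : ℝ → ℝ → ℝ → ℝ) (t : ℝ) : ℝ :=
  (1 / 2) * ∫ x : ℝ × ℝ,
    ((pt u t x.1 x.2) ^ 2 + (p1 u t x.1 x.2) ^ 2 + (p2 u t x.1 x.2) ^ 2)

/-- The energy norm `‖u(t)‖_E`. -/
def energyNorm (u : ℝ → ℝ → ℝ → ℝ) (t : ℝ) : ℝ :=
  Real.sqrt (energySq u t)

/-- `|x|` in coordinates. -/
def radius (x1 x2 : ℝ) : ℝ := Real.sqrt (x1 ^ 2 + x2 ^ 2)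

/-- The Japanese bracket `⟨z⟩ = (1+z²)^{1/2}`. -/
def jb (z : ℝ) : ℝ := Real.sqrt (1 + z ^ 2)

/-- `U(t,x) = D(|x|^{1/2}u(t,x))` where `D = ½(∂_r − ∂ₜ)`. -/
def Uop (u : ℝ → ℝ → ℝ → ℝ) : ℝ → ℝ → ℝ → ℝ :=
  fun t x1 x2 =>
    (1 / 2) * ((x1 / radius x1 x2) *
        p1 (fun s y1 y2 => radius y1 y2 ^ ((1 : ℝ) / 2) * u s y1 y2) t x1 x2
      + (x2 / radius x1 x2) *
        p2 (fun s y1 y2 => radius y1 y2 ^ ((1 : ℝ) / 2) * u s y1 y2) t x1 x2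
      - pt (fun s y1 y2 => radius y1 y2 ^ ((1 : ℝ) / 2) * u s y1 y2) t x1 x2)

/-- `V(t;σ,ω) = U(t,(t+σ)ω)`. -/
def Vop (u : ℝ → ℝ → ℝ → ℝ) (t σ ω1 ω2 : ℝ) : ℝ :=
  Uop u t ((t + σ) * ω1) ((t + σ) * ω2)

/-- The rotation vector field `Ω = x₁∂₂ − x₂∂₁`. -/
def rot (u : ℝ → ℝ → ℝ → ℝ) : ℝ → ℝ → ℝ → ℝ :=
  fun t x1 x2 => x1 * p2 u t x1 x2 - x2 * p1 u t x1 x2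

/-- `H` for component `a` (the other component being `b`):
`H_a = ½(|x|^{1/2}(∂ₜu_b)²(∂ₜu_a) + t⁻¹U_b²U_a) − (8|x|^{3/2})⁻¹(4Ω²+1)u_a`. -/
def Hfun (ua ub : ℝ → ℝ → ℝ → ℝ) (t x1 x2 : ℝ) : ℝ :=
  (1 / 2) * (radius x1 x2 ^ ((1 : ℝ) / 2) * (pt ub t x1 x2) ^ 2 * pt ua t x1 x2
      + (1 / t) * (Uop ub t x1 x2) ^ 2 * Uop ua t x1 x2)
    - (1 / (8 * radius x1 x2 ^ ((3 : ℝ) / 2))) *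
        (4 * rot (rot ua) t x1 x2 + ua t x1 x2)

/-- `K_a(t;σ,ω) = H_a(t,(t+σ)ω)`. -/
def Kfun (ua ub : ℝ → ℝ → ℝ → ℝ) (t σ ω1 ω2 : ℝ) : ℝ :=
  Hfun ua ub t ((t + σ) * ω1) ((t + σ) * ω2)

/-- `ρ = V₁K₁ − V₂K₂`. -/
def rhoFun (u1 u2 : ℝ → ℝ → ℝ → ℝ) (t σ ω1 ω2 : ℝ) : ℝ :=
  Vop u1 t σ ω1 ω2 * Kfun u1 u2 t σ ω1 ω2 -
    Vop u2 t σ ω1 ω2 * Kfun u2 u1 t σ ω1 ω2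

/-- The Radon transform: line integral of `φ` over `{y : y·ω = s}`. -/
def Rline (φ : ℝ → ℝ → ℝ) (s ω1 ω2 : ℝ) : ℝ :=
  ∫ τ : ℝ, φ (s * ω1 - τ * ω2) (s * ω2 + τ * ω1)

/-- `R₂[φ](σ,ω) = (2√2π)⁻¹ ∫_σ^∞ R[φ](s,ω)(s−σ)^{−1/2} ds`. -/
def R2 (φ : ℝ → ℝ → ℝ) (σ ω1 ω2 : ℝ) : ℝ :=
  (1 / (2 * Real.sqrt 2 * Real.pi)) *
    ∫ s in Set.Ioi σ, Rline φ s ω1 ω2 / Real.sqrt (s - σ)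

/-- The Friedlander radiation field `F₀[φ,ψ] = −∂_σR₂[φ] + R₂[ψ]`. -/
def F0 (φ ψ : ℝ → ℝ → ℝ) (σ ω1 ω2 : ℝ) : ℝ :=
  -deriv (fun σ' => R2 φ σ' ω1 ω2) σ + R2 ψ σ ω1 ω2

/-- `∂_σF₀[φ,ψ]`. -/
def dF0 (φ ψ : ℝ → ℝ → ℝ) (σ ω1 ω2 : ℝ) : ℝ :=
  deriv (fun σ' => F0 φ ψ σ' ω1 ω2) σ

/-- The vector fields `Γ = (S, L₁, L₂, Ω, ∂ₜ, ∂₁, ∂₂)`. -/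
def Gam (i : Fin 7) (u : ℝ → ℝ → ℝ → ℝ) : ℝ → ℝ → ℝ → ℝ :=
  match i with
  | 0 => fun t x1 x2 => t * pt u t x1 x2 + x1 * p1 u t x1 x2 + x2 * p2 u t x1 x2
  | 1 => fun t x1 x2 => t * p1 u t x1 x2 + x1 * pt u t x1 x2
  | 2 => fun t x1 x2 => t * p2 u t x1 x2 + x2 * pt u t x1 x2
  | 3 => rot u
  | 4 => pt u
  | 5 => p1 u
  | 6 => p2 u

/-- `Γ^α = Γ₀^{α₀}⋯Γ₆^{α₆}`. -/
def GamMulti (α : Fin 7 → ℕ) (u : ℝ → ℝ → ℝ → ℝ) : ℝ → ℝ → ℝ → ℝ :=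
  (Gam 0)^[α 0] ((Gam 1)^[α 1] ((Gam 2)^[α 2] ((Gam 3)^[α 3]
    ((Gam 4)^[α 4] ((Gam 5)^[α 5] ((Gam 6)^[α 6] u))))))

/-- Pointwise norm `|φ(t,x)|_s = Σ_{|α|≤s}|Γ^αφ(t,x)|`, for a (finite) family of
components, `|Γ^αφ|` being the Euclidean norm of the vector of components. -/
def ptwiseNorm (s : ℕ) (us : List (ℝ → ℝ → ℝ → ℝ)) (t x1 x2 : ℝ) : ℝ :=
  ∑ α : Fin 7 → Fin (s + 1),
    if (∑ i, (α i : ℕ)) ≤ s then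
      Real.sqrt ((us.map fun u => (GamMulti (fun i => (α i : ℕ)) u t x1 x2) ^ 2).sum)
    else 0

/-- `‖φ(t)‖_s = Σ_{|α|≤s}‖Γ^αφ(t,·)‖_{L²(ℝ²)}`. -/
def sobNorm (s : ℕ) (us : List (ℝ → ℝ → ℝ → ℝ)) (t : ℝ) : ℝ :=
  ∑ α : Fin 7 → Fin (s + 1),
    if (∑ i, (α i : ℕ)) ≤ s then
      Real.sqrt (∫ x : ℝ × ℝ,
        (us.map fun u => (GamMulti (fun i => (α i : ℕ)) u t x.1 x.2) ^ 2).sum)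
    else 0

/-- The components of `∂u = (∂ₜu₁,∂₁u₁,∂₂u₁,∂ₜu₂,∂₁u₂,∂₂u₂)`. -/
def dList (u1 u2 : ℝ → ℝ → ℝ → ℝ) : List (ℝ → ℝ → ℝ → ℝ) :=
  [pt u1, p1 u1, p2 u1, pt u2, p1 u2, p2 u2]

/-- Smooth solution of the free wave equation with data `(φ0,φ1)`. -/
def IsFreeSolution (φ0 φ1 : ℝ → ℝ → ℝ) (φ : ℝ → ℝ → ℝ → ℝ) : Prop :=
  Smooth3 φ ∧ (∀ t x1 x2 : ℝ, 0 < t → dAlembert φ t x1 x2 = 0) ∧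
    (∀ x1 x2 : ℝ, φ 0 x1 x2 = φ0 x1 x2) ∧
    (∀ x1 x2 : ℝ, pt φ 0 x1 x2 = φ1 x1 x2)

/-- Mixed space-time partial `∂^α = ∂ₜ^{α₀}∂₁^{α₁}∂₂^{α₂}`. -/
def dmix (α : Fin 3 → ℕ) (u : ℝ → ℝ → ℝ → ℝ) : ℝ → ℝ → ℝ → ℝ :=
  pt^[α 0] (p1^[α 1] (p2^[α 2] u))

def Fn3 (G : ℝ → ℝ → ℝ → ℝ) : ℝ × ℝ × ℝ → ℝ := fun p => G p.1 p.2.1 p.2.2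

lemma sliceT_fd {G : ℝ → ℝ → ℝ → ℝ} {t x1 x2 : ℝ}
    (h : DifferentiableAt ℝ (Fn3 G) (t, x1, x2)) :
    HasDerivAt (fun s => G s x1 x2) (fderiv ℝ (Fn3 G) (t, x1, x2) (1, 0, 0)) t := by
  have hline : HasDerivAt (fun s : ℝ => ((s, x1, x2) : ℝ × ℝ × ℝ)) (1, 0, 0) t :=
    (hasDerivAt_id t).prodMk ((hasDerivAt_const t x1).prodMk (hasDerivAt_const t x2))
  exact h.hasFDerivAt.comp_hasDerivAt t hline

lemma slice1_fd {G : ℝ → ℝ → ℝ → ℝ} {t x1 x2 : ℝ}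
    (h : DifferentiableAt ℝ (Fn3 G) (t, x1, x2)) :
    HasDerivAt (fun y => G t y x2) (fderiv ℝ (Fn3 G) (t, x1, x2) (0, 1, 0)) x1 := by
  have hline : HasDerivAt (fun y : ℝ => ((t, y, x2) : ℝ × ℝ × ℝ)) (0, 1, 0) x1 :=
    (hasDerivAt_const x1 t).prodMk ((hasDerivAt_id x1).prodMk (hasDerivAt_const x1 x2))
  exact h.hasFDerivAt.comp_hasDerivAt x1 hline

lemma slice2_fd {G : ℝ → ℝ → ℝ → ℝ} {t x1 x2 : ℝ}
    (h : DifferentiableAt ℝ (Fn3 G) (t, x1, x2)) :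
    HasDerivAt (fun y => G t x1 y) (fderiv ℝ (Fn3 G) (t, x1, x2) (0, 0, 1)) x2 := by
  have hline : HasDerivAt (fun y : ℝ => ((t, x1, y) : ℝ × ℝ × ℝ)) (0, 0, 1) x2 :=
    (hasDerivAt_const x2 t).prodMk ((hasDerivAt_const x2 x1).prodMk (hasDerivAt_id x2))
  exact h.hasFDerivAt.comp_hasDerivAt x2 hline

lemma smooth3_fn {G : ℝ → ℝ → ℝ → ℝ} (h : Smooth3 G) : ContDiff ℝ (⊤ : ℕ∞) (Fn3 G) := h

lemma pt_eq_fd {G : ℝ → ℝ → ℝ → ℝ} {t x1 x2 : ℝ}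
    (h : DifferentiableAt ℝ (Fn3 G) (t, x1, x2)) :
    pt G t x1 x2 = fderiv ℝ (Fn3 G) (t, x1, x2) (1, 0, 0) := (sliceT_fd h).deriv

lemma p1_eq_fd {G : ℝ → ℝ → ℝ → ℝ} {t x1 x2 : ℝ}
    (h : DifferentiableAt ℝ (Fn3 G) (t, x1, x2)) :
    p1 G t x1 x2 = fderiv ℝ (Fn3 G) (t, x1, x2) (0, 1, 0) := (slice1_fd h).deriv

lemma p2_eq_fd {G : ℝ → ℝ → ℝ → ℝ} {t x1 x2 : ℝ}
    (h : DifferentiableAt ℝ (Fn3 G) (t, x1, x2)) :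
    p2 G t x1 x2 = fderiv ℝ (Fn3 G) (t, x1, x2) (0, 0, 1) := (slice2_fd h).deriv

lemma top_add_one_le : ((⊤ : ℕ∞) : WithTop ℕ∞) + 1 ≤ ((⊤ : ℕ∞) : WithTop ℕ∞) := by
  simp

lemma smooth3_diffAt {G : ℝ → ℝ → ℝ → ℝ} (h : Smooth3 G) (p : ℝ × ℝ × ℝ) :
    DifferentiableAt ℝ (Fn3 G) p := (h.differentiable (by simp)).differentiableAt

lemma fn3_pt {G : ℝ → ℝ → ℝ → ℝ} (h : Smooth3 G) :
    Fn3 (pt G) = fun p => fderiv ℝ (Fn3 G) p (1, 0, 0) := by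
  funext p
  exact pt_eq_fd (smooth3_diffAt h _)

lemma smooth3_pt {G : ℝ → ℝ → ℝ → ℝ} (h : Smooth3 G) : Smooth3 (pt G) := by
  show ContDiff ℝ (⊤ : ℕ∞) (Fn3 (pt G))
  rw [fn3_pt h]
  exact (h.fderiv_right top_add_one_le).clm_apply contDiff_const

lemma fn3_p1 {G : ℝ → ℝ → ℝ → ℝ} (h : Smooth3 G) :
    Fn3 (p1 G) = fun p => fderiv ℝ (Fn3 G) p (0, 1, 0) := by
  funext p
  exact p1_eq_fd (smooth3_diffAt h _)

lemma smooth3_p1 {G : ℝ → ℝ → ℝ → ℝ} (h : Smooth3 G) : Smooth3 (p1 G) := by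
  show ContDiff ℝ (⊤ : ℕ∞) (Fn3 (p1 G))
  rw [fn3_p1 h]
  exact (h.fderiv_right top_add_one_le).clm_apply contDiff_const

lemma fn3_p2 {G : ℝ → ℝ → ℝ → ℝ} (h : Smooth3 G) :
    Fn3 (p2 G) = fun p => fderiv ℝ (Fn3 G) p (0, 0, 1) := by
  funext p
  exact p2_eq_fd (smooth3_diffAt h _)

lemma smooth3_p2 {G : ℝ → ℝ → ℝ → ℝ} (h : Smooth3 G) : Smooth3 (p2 G) := by
  show ContDiff ℝ (⊤ : ℕ∞) (Fn3 (p2 G))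
  rw [fn3_p2 h]
  exact (h.fderiv_right top_add_one_le).clm_apply contDiff_const

-- Clairaut-type second derivative symmetry
lemma second_symm {G : ℝ → ℝ → ℝ → ℝ} (h : Smooth3 G) (p : ℝ × ℝ × ℝ) (v w : ℝ × ℝ × ℝ) :
    fderiv ℝ (fun q => fderiv ℝ (Fn3 G) q v) p w =
      fderiv ℝ (fun q => fderiv ℝ (Fn3 G) q w) p v := by
  have hF : ContDiff ℝ (⊤ : ℕ∞) (Fn3 G) := h
  have hΦ : DifferentiableAt ℝ (fderiv ℝ (Fn3 G)) p :=
    ((hF.fderiv_right top_add_one_le).differentiable (by simp)).differentiableAt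
  have hsym : IsSymmSndFDerivAt ℝ (Fn3 G) p :=
    hF.contDiffAt.isSymmSndFDerivAt (by
      rw [show ((2 : WithTop ℕ∞)) = ((2 : ℕ∞) : WithTop ℕ∞) from rfl]
      rw [minSmoothness_of_isRCLikeNormedField]; exact_mod_cast le_top)
  have key : ∀ a b : ℝ × ℝ × ℝ, fderiv ℝ (fun q => fderiv ℝ (Fn3 G) q a) p b =
      fderiv ℝ (fderiv ℝ (Fn3 G)) p b a := by
    intro a b
    have := fderiv_clm_apply (𝕜 := ℝ) (c := fderiv ℝ (Fn3 G)) (u := fun _ => a) hΦ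
      (differentiableAt_const a)
    rw [show (fun q => fderiv ℝ (Fn3 G) q a) = fun q => (fderiv ℝ (Fn3 G) q) ((fun _ => a) q)
      from rfl, this]
    simp
  rw [key v w, key w v, hsym w v]

lemma ptp1_comm {G : ℝ → ℝ → ℝ → ℝ} (h : Smooth3 G) (t x1 x2 : ℝ) :
    pt (p1 G) t x1 x2 = p1 (pt G) t x1 x2 := by
  rw [pt_eq_fd (smooth3_diffAt (smooth3_p1 h) _), p1_eq_fd (smooth3_diffAt (smooth3_pt h) _)]
  rw [show Fn3 (p1 G) = fun q => fderiv ℝ (Fn3 G) q (0,1,0) from fn3_p1 h,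
      show Fn3 (pt G) = fun q => fderiv ℝ (Fn3 G) q (1,0,0) from fn3_pt h]
  exact second_symm h _ _ _

lemma ptp2_comm {G : ℝ → ℝ → ℝ → ℝ} (h : Smooth3 G) (t x1 x2 : ℝ) :
    pt (p2 G) t x1 x2 = p2 (pt G) t x1 x2 := by
  rw [pt_eq_fd (smooth3_diffAt (smooth3_p2 h) _), p2_eq_fd (smooth3_diffAt (smooth3_pt h) _)]
  rw [show Fn3 (p2 G) = fun q => fderiv ℝ (Fn3 G) q (0,0,1) from fn3_p2 h,
      show Fn3 (pt G) = fun q => fderiv ℝ (Fn3 G) q (1,0,0) from fn3_pt h]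
  exact second_symm h _ _ _

lemma p1p2_comm {G : ℝ → ℝ → ℝ → ℝ} (h : Smooth3 G) (t x1 x2 : ℝ) :
    p1 (p2 G) t x1 x2 = p2 (p1 G) t x1 x2 := by
  rw [p1_eq_fd (smooth3_diffAt (smooth3_p2 h) _), p2_eq_fd (smooth3_diffAt (smooth3_p1 h) _)]
  rw [show Fn3 (p2 G) = fun q => fderiv ℝ (Fn3 G) q (0,0,1) from fn3_p2 h,
      show Fn3 (p1 G) = fun q => fderiv ℝ (Fn3 G) q (0,1,0) from fn3_p1 h]
  exact second_symm h _ _ _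

-- slice HasDerivAt for globally smooth functions, with partial-derivative values
lemma sliceT_s {G : ℝ → ℝ → ℝ → ℝ} (h : Smooth3 G) (t x1 x2 : ℝ) :
    HasDerivAt (fun s => G s x1 x2) (pt G t x1 x2) t := by
  have := sliceT_fd (smooth3_diffAt h (t, x1, x2))
  exact (pt_eq_fd (smooth3_diffAt h _)) ▸ this

lemma slice1_s {G : ℝ → ℝ → ℝ → ℝ} (h : Smooth3 G) (t x1 x2 : ℝ) :
    HasDerivAt (fun y => G t y x2) (p1 G t x1 x2) x1 := by
  have := slice1_fd (smooth3_diffAt h (t, x1, x2))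
  exact (p1_eq_fd (smooth3_diffAt h _)) ▸ this

lemma slice2_s {G : ℝ → ℝ → ℝ → ℝ} (h : Smooth3 G) (t x1 x2 : ℝ) :
    HasDerivAt (fun y => G t x1 y) (p2 G t x1 x2) x2 := by
  have := slice2_fd (smooth3_diffAt h (t, x1, x2))
  exact (p2_eq_fd (smooth3_diffAt h _)) ▸ this

-- chain rule along the outgoing ray
lemma hasDerivAt_ray {G : ℝ → ℝ → ℝ → ℝ} {σ ω1 ω2 t : ℝ}
    (hG : DifferentiableAt ℝ (Fn3 G) (t, (t + σ) * ω1, (t + σ) * ω2)) :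
    HasDerivAt (fun s => G s ((s + σ) * ω1) ((s + σ) * ω2))
      (pt G t ((t + σ) * ω1) ((t + σ) * ω2)
        + ω1 * p1 G t ((t + σ) * ω1) ((t + σ) * ω2)
        + ω2 * p2 G t ((t + σ) * ω1) ((t + σ) * ω2)) t := by
  have hγ : HasDerivAt (fun s : ℝ => ((s, (s + σ) * ω1, (s + σ) * ω2) : ℝ × ℝ × ℝ))
      (1, ω1, ω2) t := by
    have h1 : HasDerivAt (fun s : ℝ => (s + σ) * ω1) ω1 t := by
      simpa using ((hasDerivAt_id t).add_const σ).mul_const ω1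
    have h2 : HasDerivAt (fun s : ℝ => (s + σ) * ω2) ω2 t := by
      simpa using ((hasDerivAt_id t).add_const σ).mul_const ω2
    exact (hasDerivAt_id t).prodMk (h1.prodMk h2)
  have hcomp := hG.hasFDerivAt.comp_hasDerivAt t hγ
  have hval : fderiv ℝ (Fn3 G) (t, (t + σ) * ω1, (t + σ) * ω2) (1, ω1, ω2)
      = pt G t ((t + σ) * ω1) ((t + σ) * ω2)
        + ω1 * p1 G t ((t + σ) * ω1) ((t + σ) * ω2)
        + ω2 * p2 G t ((t + σ) * ω1) ((t + σ) * ω2) := by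
    rw [pt_eq_fd hG, p1_eq_fd hG, p2_eq_fd hG]
    have hv : ((1, ω1, ω2) : ℝ × ℝ × ℝ)
        = (1, 0, 0) + ω1 • ((0, 1, 0) : ℝ × ℝ × ℝ) + ω2 • ((0, 0, 1) : ℝ × ℝ × ℝ) := by
      simp [Prod.ext_iff]
    rw [hv, map_add, map_add, ContinuousLinearMap.map_smul, ContinuousLinearMap.map_smul]
    simp [smul_eq_mul]
  exact hval ▸ hcomp

-- rpow derivative helpers
lemma hasDerivAt_Qpow (e c : ℝ) {y : ℝ} (h : y ^ 2 + c ≠ 0) :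
    HasDerivAt (fun z : ℝ => (z ^ 2 + c) ^ e) (2 * e * y * (y ^ 2 + c) ^ (e - 1)) y := by
  have h1 : HasDerivAt (fun z : ℝ => z ^ 2 + c) (2 * y) y := by
    simpa using (hasDerivAt_pow 2 y).add_const c
  have := h1.rpow_const (p := e) (Or.inl h)
  convert this using 1
  ring

lemma hasDerivAt_Qpow' (e c : ℝ) {y : ℝ} (h : c + y ^ 2 ≠ 0) :
    HasDerivAt (fun z : ℝ => (c + z ^ 2) ^ e) (2 * e * y * (c + y ^ 2) ^ (e - 1)) y := by
  have h1 : HasDerivAt (fun z : ℝ => c + z ^ 2) (2 * y) y := by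
    simpa using (hasDerivAt_pow 2 y).const_add c
  have := h1.rpow_const (p := e) (Or.inl h)
  convert this using 1
  ring


lemma hQ1_14 {y1 y2 : ℝ} (h : y1 ^ 2 + y2 ^ 2 ≠ 0) :
    HasDerivAt (fun y => (y ^ 2 + y2 ^ 2) ^ ((1:ℝ)/4))
      ((1/2) * y1 * (y1 ^ 2 + y2 ^ 2) ^ (-(3:ℝ)/4)) y1 := by
  have := hasDerivAt_Qpow ((1:ℝ)/4) (y2 ^ 2) h
  rw [show ((1:ℝ)/4 - 1) = -(3:ℝ)/4 by norm_num] at this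
  convert this using 1; ring

lemma hQ1_m34 {y1 y2 : ℝ} (h : y1 ^ 2 + y2 ^ 2 ≠ 0) :
    HasDerivAt (fun y => (y ^ 2 + y2 ^ 2) ^ (-(3:ℝ)/4))
      (-(3/2) * y1 * (y1 ^ 2 + y2 ^ 2) ^ (-(7:ℝ)/4)) y1 := by
  have := hasDerivAt_Qpow (-(3:ℝ)/4) (y2 ^ 2) h
  rw [show (-(3:ℝ)/4 - 1) = -(7:ℝ)/4 by norm_num] at this
  convert this using 1; ring

lemma hQ2_14 {y1 y2 : ℝ} (h : y1 ^ 2 + y2 ^ 2 ≠ 0) :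
    HasDerivAt (fun y => (y1 ^ 2 + y ^ 2) ^ ((1:ℝ)/4))
      ((1/2) * y2 * (y1 ^ 2 + y2 ^ 2) ^ (-(3:ℝ)/4)) y2 := by
  have := hasDerivAt_Qpow' ((1:ℝ)/4) (y1 ^ 2) h
  rw [show ((1:ℝ)/4 - 1) = -(3:ℝ)/4 by norm_num] at this
  convert this using 1; ring

lemma hQ2_m34 {y1 y2 : ℝ} (h : y1 ^ 2 + y2 ^ 2 ≠ 0) :
    HasDerivAt (fun y => (y1 ^ 2 + y ^ 2) ^ (-(3:ℝ)/4))
      (-(3/2) * y2 * (y1 ^ 2 + y2 ^ 2) ^ (-(7:ℝ)/4)) y2 := by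
  have := hasDerivAt_Qpow' (-(3:ℝ)/4) (y1 ^ 2) h
  rw [show (-(3:ℝ)/4 - 1) = -(7:ℝ)/4 by norm_num] at this
  convert this using 1; ring

lemma rad_half (y1 y2 : ℝ) :
    radius y1 y2 ^ ((1:ℝ)/2) = (y1 ^ 2 + y2 ^ 2) ^ ((1:ℝ)/4) := by
  rw [radius, Real.sqrt_eq_rpow, ← Real.rpow_mul (by positivity)]
  norm_num

lemma Wfun_eq (u : ℝ → ℝ → ℝ → ℝ) :
    (fun s z1 z2 => radius z1 z2 ^ ((1:ℝ)/2) * u s z1 z2)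
      = fun s z1 z2 => (z1 ^ 2 + z2 ^ 2) ^ ((1:ℝ)/4) * u s z1 z2 := by
  funext s z1 z2; rw [rad_half]

lemma ptW {u : ℝ → ℝ → ℝ → ℝ} (h : Smooth3 u) (t y1 y2 : ℝ) :
    pt (fun s z1 z2 => radius z1 z2 ^ ((1:ℝ)/2) * u s z1 z2) t y1 y2
      = (y1 ^ 2 + y2 ^ 2) ^ ((1:ℝ)/4) * pt u t y1 y2 := by
  rw [Wfun_eq]
  exact ((sliceT_s h t y1 y2).const_mul ((y1 ^ 2 + y2 ^ 2) ^ ((1:ℝ)/4))).deriv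

lemma p1W {u : ℝ → ℝ → ℝ → ℝ} (h : Smooth3 u) {t y1 y2 : ℝ} (hq : y1 ^ 2 + y2 ^ 2 ≠ 0) :
    p1 (fun s z1 z2 => radius z1 z2 ^ ((1:ℝ)/2) * u s z1 z2) t y1 y2
      = (1/2) * y1 * (y1 ^ 2 + y2 ^ 2) ^ (-(3:ℝ)/4) * u t y1 y2
        + (y1 ^ 2 + y2 ^ 2) ^ ((1:ℝ)/4) * p1 u t y1 y2 := by
  rw [Wfun_eq]
  exact ((hQ1_14 hq).mul (slice1_s h t y1 y2)).deriv

lemma p2W {u : ℝ → ℝ → ℝ → ℝ} (h : Smooth3 u) {t y1 y2 : ℝ} (hq : y1 ^ 2 + y2 ^ 2 ≠ 0) :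
    p2 (fun s z1 z2 => radius z1 z2 ^ ((1:ℝ)/2) * u s z1 z2) t y1 y2
      = (1/2) * y2 * (y1 ^ 2 + y2 ^ 2) ^ (-(3:ℝ)/4) * u t y1 y2
        + (y1 ^ 2 + y2 ^ 2) ^ ((1:ℝ)/4) * p2 u t y1 y2 := by
  rw [Wfun_eq]
  exact ((hQ2_14 hq).mul (slice2_s h t y1 y2)).deriv


lemma p2rot {u : ℝ → ℝ → ℝ → ℝ} (h : Smooth3 u) (t x1 x2 : ℝ) :
    p2 (rot u) t x1 x2
      = x1 * p2 (p2 u) t x1 x2 - (1 * p1 u t x1 x2 + x2 * p2 (p1 u) t x1 x2) := by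
  have : HasDerivAt (fun y => x1 * p2 u t x1 y - y * p1 u t x1 y)
      (x1 * p2 (p2 u) t x1 x2 - (1 * p1 u t x1 x2 + x2 * p2 (p1 u) t x1 x2)) x2 :=
    ((slice2_s (smooth3_p2 h) t x1 x2).const_mul x1).sub
      ((hasDerivAt_id x2).mul (slice2_s (smooth3_p1 h) t x1 x2))
  exact this.deriv

lemma p1rot {u : ℝ → ℝ → ℝ → ℝ} (h : Smooth3 u) (t x1 x2 : ℝ) :
    p1 (rot u) t x1 x2
      = (1 * p2 u t x1 x2 + x1 * p1 (p2 u) t x1 x2) - x2 * p1 (p1 u) t x1 x2 := by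
  have : HasDerivAt (fun y => y * p2 u t y x2 - x2 * p1 u t y x2)
      ((1 * p2 u t x1 x2 + x1 * p1 (p2 u) t x1 x2) - x2 * p1 (p1 u) t x1 x2) x1 :=
    ((hasDerivAt_id x1).mul (slice1_s (smooth3_p2 h) t x1 x2)).sub
      ((slice1_s (smooth3_p1 h) t x1 x2).const_mul x2)
  exact this.deriv

lemma rotrot_val {u : ℝ → ℝ → ℝ → ℝ} (h : Smooth3 u) (t x1 x2 : ℝ) :
    rot (rot u) t x1 x2
      = x1 * (x1 * p2 (p2 u) t x1 x2 - (1 * p1 u t x1 x2 + x2 * p2 (p1 u) t x1 x2))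
        - x2 * ((1 * p2 u t x1 x2 + x1 * p1 (p2 u) t x1 x2) - x2 * p1 (p1 u) t x1 x2) := by
  show x1 * p2 (rot u) t x1 x2 - x2 * p1 (rot u) t x1 x2 = _
  rw [p2rot h, p1rot h]

-- rpow power conversions at r > 0
lemma rpow_sq_quarter {r : ℝ} (hr : 0 < r) :
    ((r ^ 2 : ℝ)) ^ ((1:ℝ)/4) = r ^ ((1:ℝ)/2) := by
  rw [← Real.rpow_natCast r 2, ← Real.rpow_mul hr.le]
  norm_num

lemma rpow_sq_m34 {r : ℝ} (hr : 0 < r) :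
    ((r ^ 2 : ℝ)) ^ (-(3:ℝ)/4) = 1 / (r ^ ((1:ℝ)/2)) ^ 3 := by
  rw [← Real.rpow_natCast r 2, ← Real.rpow_mul hr.le,
      ← Real.rpow_natCast (r ^ ((1:ℝ)/2)) 3, ← Real.rpow_mul hr.le, one_div,
      ← Real.rpow_neg hr.le]
  norm_num

lemma rpow_sq_m74 {r : ℝ} (hr : 0 < r) :
    ((r ^ 2 : ℝ)) ^ (-(7:ℝ)/4) = 1 / (r ^ ((1:ℝ)/2)) ^ 7 := by
  rw [← Real.rpow_natCast r 2, ← Real.rpow_mul hr.le,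
      ← Real.rpow_natCast (r ^ ((1:ℝ)/2)) 7, ← Real.rpow_mul hr.le, one_div,
      ← Real.rpow_neg hr.le]
  norm_num

lemma rpow_32 {r : ℝ} (hr : 0 < r) :
    r ^ ((3:ℝ)/2) = (r ^ ((1:ℝ)/2)) ^ 3 := by
  rw [← Real.rpow_natCast (r ^ ((1:ℝ)/2)) 3, ← Real.rpow_mul hr.le]
  norm_num

lemma rpow_half_sq {r : ℝ} (hr : 0 < r) : (r ^ ((1:ℝ)/2)) ^ 2 = r := by
  rw [← Real.rpow_natCast (r ^ ((1:ℝ)/2)) 2, ← Real.rpow_mul hr.le]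
  norm_num





set_option maxHeartbeats 4000000 in
theorem aux_profile (ua ub : ℝ → ℝ → ℝ → ℝ)
    (hsa : Smooth3 ua) (hsb : Smooth3 ub)
    (hpde : ∀ t x1 x2 : ℝ, 0 < t →
      pt (pt ua) t x1 x2 - p1 (p1 ua) t x1 x2 - p2 (p2 ua) t x1 x2
        = -(pt ub t x1 x2) ^ 2 * pt ua t x1 x2)
    (σ ω1 ω2 : ℝ) (hω : ω1 ^ 2 + ω2 ^ 2 = 1) (t : ℝ) (ht : 0 < t) (hts : 0 < t + σ) :
    HasDerivAt (fun s => Vop ua s σ ω1 ω2)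
      (-1 / (2 * t) * Vop ua t σ ω1 ω2 * (Vop ub t σ ω1 ω2) ^ 2
        + Kfun ua ub t σ ω1 ω2) t := by
  have hbase : ∀ s : ℝ, ((s + σ) * ω1) ^ 2 + ((s + σ) * ω2) ^ 2 = (s + σ) ^ 2 := by
    intro s
    have h : ((s + σ) * ω1) ^ 2 + ((s + σ) * ω2) ^ 2 = (s + σ) ^ 2 * (ω1 ^ 2 + ω2 ^ 2) := by
      ring
    rw [h, hω, mul_one]
  set x1 : ℝ := (t + σ) * ω1 with hx1
  set x2 : ℝ := (t + σ) * ω2 with hx2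
  have hqneP : x1 ^ 2 + x2 ^ 2 ≠ 0 := by
    rw [hx1, hx2, hbase t]; positivity
  -- the explicit profile function along rays
  set G : ℝ → ℝ → ℝ → ℝ := fun s y1 y2 =>
    (1/2) * (ω1 * ((1/2) * y1 * (y1 ^ 2 + y2 ^ 2) ^ (-(3:ℝ)/4) * ua s y1 y2
          + (y1 ^ 2 + y2 ^ 2) ^ ((1:ℝ)/4) * p1 ua s y1 y2)
      + ω2 * ((1/2) * y2 * (y1 ^ 2 + y2 ^ 2) ^ (-(3:ℝ)/4) * ua s y1 y2
          + (y1 ^ 2 + y2 ^ 2) ^ ((1:ℝ)/4) * p2 ua s y1 y2)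
      - (y1 ^ 2 + y2 ^ 2) ^ ((1:ℝ)/4) * pt ua s y1 y2) with hGdef
  -- V agrees with the ray restriction of G near t
  have hVeqG : ∀ s : ℝ, 0 < s + σ → Vop ua s σ ω1 ω2 = G s ((s + σ) * ω1) ((s + σ) * ω2) := by
    intro s hs
    have hqne : ((s + σ) * ω1) ^ 2 + ((s + σ) * ω2) ^ 2 ≠ 0 := by
      rw [hbase s]; positivity
    have hr : radius ((s + σ) * ω1) ((s + σ) * ω2) = s + σ := by
      rw [radius, hbase s, Real.sqrt_sq hs.le]
    simp only [Vop, Uop]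
    rw [hr, p1W hsa hqne, p2W hsa hqne, ptW hsa, hGdef]
    field_simp
  have hEv : (fun s => Vop ua s σ ω1 ω2) =ᶠ[nhds t]
      (fun s => G s ((s + σ) * ω1) ((s + σ) * ω2)) := by
    filter_upwards [Ioi_mem_nhds (show -σ < t by linarith)] with s hs
    exact hVeqG s (by simp only [Set.mem_Ioi] at hs; linarith)
  -- differentiability of G at the base point
  have huaD : DifferentiableAt ℝ (fun q : ℝ × ℝ × ℝ => ua q.1 q.2.1 q.2.2) (t, x1, x2) :=
    smooth3_diffAt hsa _
  have hptD : DifferentiableAt ℝ (fun q : ℝ × ℝ × ℝ => pt ua q.1 q.2.1 q.2.2) (t, x1, x2) :=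
    smooth3_diffAt (smooth3_pt hsa) _
  have hp1D : DifferentiableAt ℝ (fun q : ℝ × ℝ × ℝ => p1 ua q.1 q.2.1 q.2.2) (t, x1, x2) :=
    smooth3_diffAt (smooth3_p1 hsa) _
  have hp2D : DifferentiableAt ℝ (fun q : ℝ × ℝ × ℝ => p2 ua q.1 q.2.1 q.2.2) (t, x1, x2) :=
    smooth3_diffAt (smooth3_p2 hsa) _
  have hQd : DifferentiableAt ℝ (fun q : ℝ × ℝ × ℝ => q.2.1 ^ 2 + q.2.2 ^ 2) (t, x1, x2) := by
    fun_prop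
  have hQMd : DifferentiableAt ℝ
      (fun q : ℝ × ℝ × ℝ => (q.2.1 ^ 2 + q.2.2 ^ 2) ^ (-(3:ℝ)/4)) (t, x1, x2) :=
    hQd.rpow_const (Or.inl hqneP)
  have hQPd : DifferentiableAt ℝ
      (fun q : ℝ × ℝ × ℝ => (q.2.1 ^ 2 + q.2.2 ^ 2) ^ ((1:ℝ)/4)) (t, x1, x2) :=
    hQd.rpow_const (Or.inl hqneP)
  have hy1d : DifferentiableAt ℝ (fun q : ℝ × ℝ × ℝ => (1:ℝ)/2 * q.2.1) (t, x1, x2) := by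
    fun_prop
  have hy2d : DifferentiableAt ℝ (fun q : ℝ × ℝ × ℝ => (1:ℝ)/2 * q.2.2) (t, x1, x2) := by
    fun_prop
  have hGD : DifferentiableAt ℝ (Fn3 G) (t, x1, x2) := by
    have hfn : Fn3 G = fun q : ℝ × ℝ × ℝ =>
        (1/2) * (ω1 * ((1/2) * q.2.1 * (q.2.1 ^ 2 + q.2.2 ^ 2) ^ (-(3:ℝ)/4) * ua q.1 q.2.1 q.2.2
              + (q.2.1 ^ 2 + q.2.2 ^ 2) ^ ((1:ℝ)/4) * p1 ua q.1 q.2.1 q.2.2)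
          + ω2 * ((1/2) * q.2.2 * (q.2.1 ^ 2 + q.2.2 ^ 2) ^ (-(3:ℝ)/4) * ua q.1 q.2.1 q.2.2
              + (q.2.1 ^ 2 + q.2.2 ^ 2) ^ ((1:ℝ)/4) * p2 ua q.1 q.2.1 q.2.2)
          - (q.2.1 ^ 2 + q.2.2 ^ 2) ^ ((1:ℝ)/4) * pt ua q.1 q.2.1 q.2.2) := by
      rw [hGdef]; rfl
    rw [hfn]
    exact (((((hy1d.mul hQMd).mul huaD).add (hQPd.mul hp1D)).const_mul ω1 |>.add
      ((((hy2d.mul hQMd).mul huaD).add (hQPd.mul hp2D)).const_mul ω2)).sub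
      (hQPd.mul hptD)).const_mul (1/2)
  have hray := hasDerivAt_ray (G := G) (σ := σ) (ω1 := ω1) (ω2 := ω2) (t := t) hGD
  rw [← hx1, ← hx2] at hray
  -- time derivative of G
  have cT : HasDerivAt (fun s => G s x1 x2)
      ((1/2) * (ω1 * ((1/2) * x1 * (x1 ^ 2 + x2 ^ 2) ^ (-(3:ℝ)/4) * pt ua t x1 x2
            + (x1 ^ 2 + x2 ^ 2) ^ ((1:ℝ)/4) * pt (p1 ua) t x1 x2)
        + ω2 * ((1/2) * x2 * (x1 ^ 2 + x2 ^ 2) ^ (-(3:ℝ)/4) * pt ua t x1 x2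
            + (x1 ^ 2 + x2 ^ 2) ^ ((1:ℝ)/4) * pt (p2 ua) t x1 x2)
        - (x1 ^ 2 + x2 ^ 2) ^ ((1:ℝ)/4) * pt (pt ua) t x1 x2)) t := by
    rw [hGdef]
    have q1 := ((sliceT_s hsa t x1 x2).const_mul
        ((1/2) * x1 * (x1 ^ 2 + x2 ^ 2) ^ (-(3:ℝ)/4))).add
      ((sliceT_s (smooth3_p1 hsa) t x1 x2).const_mul ((x1 ^ 2 + x2 ^ 2) ^ ((1:ℝ)/4)))
    have q2 := ((sliceT_s hsa t x1 x2).const_mul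
        ((1/2) * x2 * (x1 ^ 2 + x2 ^ 2) ^ (-(3:ℝ)/4))).add
      ((sliceT_s (smooth3_p2 hsa) t x1 x2).const_mul ((x1 ^ 2 + x2 ^ 2) ^ ((1:ℝ)/4)))
    have q3 := (sliceT_s (smooth3_pt hsa) t x1 x2).const_mul ((x1 ^ 2 + x2 ^ 2) ^ ((1:ℝ)/4))
    exact (((q1.const_mul ω1).add (q2.const_mul ω2)).sub q3).const_mul (1/2)
  have hptG : pt G t x1 x2 = _ := cT.deriv
  -- x1 derivative of G
  have hA1 : HasDerivAt (fun y : ℝ => (1:ℝ)/2 * y) ((1:ℝ)/2 * 1) x1 :=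
    (hasDerivAt_id x1).const_mul ((1:ℝ)/2)
  have c1 : HasDerivAt (fun y => G t y x2)
      ((1/2) * (ω1 * (((1/2 * 1 * ((x1 ^ 2 + x2 ^ 2) ^ (-(3:ℝ)/4))
              + 1/2 * x1 * (-(3/2) * x1 * (x1 ^ 2 + x2 ^ 2) ^ (-(7:ℝ)/4))) * ua t x1 x2
            + 1/2 * x1 * ((x1 ^ 2 + x2 ^ 2) ^ (-(3:ℝ)/4)) * p1 ua t x1 x2)
          + ((1/2) * x1 * (x1 ^ 2 + x2 ^ 2) ^ (-(3:ℝ)/4) * p1 ua t x1 x2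
            + (x1 ^ 2 + x2 ^ 2) ^ ((1:ℝ)/4) * p1 (p1 ua) t x1 x2))
        + ω2 * ((1/2 * x2 * (-(3/2) * x1 * (x1 ^ 2 + x2 ^ 2) ^ (-(7:ℝ)/4)) * ua t x1 x2
              + 1/2 * x2 * ((x1 ^ 2 + x2 ^ 2) ^ (-(3:ℝ)/4)) * p1 ua t x1 x2)
          + ((1/2) * x1 * (x1 ^ 2 + x2 ^ 2) ^ (-(3:ℝ)/4) * p2 ua t x1 x2
            + (x1 ^ 2 + x2 ^ 2) ^ ((1:ℝ)/4) * p1 (p2 ua) t x1 x2))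
        - ((1/2) * x1 * (x1 ^ 2 + x2 ^ 2) ^ (-(3:ℝ)/4) * pt ua t x1 x2
            + (x1 ^ 2 + x2 ^ 2) ^ ((1:ℝ)/4) * p1 (pt ua) t x1 x2))) x1 := by
    rw [hGdef]
    have q1 := ((hA1.mul (hQ1_m34 hqneP)).mul (slice1_s hsa t x1 x2)).add
      ((hQ1_14 hqneP).mul (slice1_s (smooth3_p1 hsa) t x1 x2))
    have q2 := (((hQ1_m34 hqneP).const_mul ((1:ℝ)/2 * x2)).mul (slice1_s hsa t x1 x2)).add
      ((hQ1_14 hqneP).mul (slice1_s (smooth3_p2 hsa) t x1 x2))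
    have q3 := (hQ1_14 hqneP).mul (slice1_s (smooth3_pt hsa) t x1 x2)
    exact (((q1.const_mul ω1).add (q2.const_mul ω2)).sub q3).const_mul (1/2)
  have hp1G : p1 G t x1 x2 = _ := c1.deriv
  -- x2 derivative of G
  have hA2 : HasDerivAt (fun y : ℝ => (1:ℝ)/2 * y) ((1:ℝ)/2 * 1) x2 :=
    (hasDerivAt_id x2).const_mul ((1:ℝ)/2)
  have c2 : HasDerivAt (fun y => G t x1 y)
      ((1/2) * (ω1 * ((1/2 * x1 * (-(3/2) * x2 * (x1 ^ 2 + x2 ^ 2) ^ (-(7:ℝ)/4)) * ua t x1 x2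
              + 1/2 * x1 * ((x1 ^ 2 + x2 ^ 2) ^ (-(3:ℝ)/4)) * p2 ua t x1 x2)
          + ((1/2) * x2 * (x1 ^ 2 + x2 ^ 2) ^ (-(3:ℝ)/4) * p1 ua t x1 x2
            + (x1 ^ 2 + x2 ^ 2) ^ ((1:ℝ)/4) * p2 (p1 ua) t x1 x2))
        + ω2 * (((1/2 * 1 * ((x1 ^ 2 + x2 ^ 2) ^ (-(3:ℝ)/4))
              + 1/2 * x2 * (-(3/2) * x2 * (x1 ^ 2 + x2 ^ 2) ^ (-(7:ℝ)/4))) * ua t x1 x2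
            + 1/2 * x2 * ((x1 ^ 2 + x2 ^ 2) ^ (-(3:ℝ)/4)) * p2 ua t x1 x2)
          + ((1/2) * x2 * (x1 ^ 2 + x2 ^ 2) ^ (-(3:ℝ)/4) * p2 ua t x1 x2
            + (x1 ^ 2 + x2 ^ 2) ^ ((1:ℝ)/4) * p2 (p2 ua) t x1 x2))
        - ((1/2) * x2 * (x1 ^ 2 + x2 ^ 2) ^ (-(3:ℝ)/4) * pt ua t x1 x2
            + (x1 ^ 2 + x2 ^ 2) ^ ((1:ℝ)/4) * p2 (pt ua) t x1 x2))) x2 := by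
    rw [hGdef]
    have q1 := (((hQ2_m34 hqneP).const_mul ((1:ℝ)/2 * x1)).mul (slice2_s hsa t x1 x2)).add
      ((hQ2_14 hqneP).mul (slice2_s (smooth3_p1 hsa) t x1 x2))
    have q2 := ((hA2.mul (hQ2_m34 hqneP)).mul (slice2_s hsa t x1 x2)).add
      ((hQ2_14 hqneP).mul (slice2_s (smooth3_p2 hsa) t x1 x2))
    have q3 := (hQ2_14 hqneP).mul (slice2_s (smooth3_pt hsa) t x1 x2)
    exact (((q1.const_mul ω1).add (q2.const_mul ω2)).sub q3).const_mul (1/2)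
  have hp2G : p2 G t x1 x2 = _ := c2.deriv
  rw [hptG, hp1G, hp2G] at hray
  have hV : HasDerivAt (fun s => Vop ua s σ ω1 ω2) _ t := hray.congr_of_eventuallyEq hEv
  convert hV using 1
  simp only [Vop, Kfun, Hfun]
  rw [← hx1, ← hx2]
  rw [rotrot_val hsa]
  have hQe : x1 ^ 2 + x2 ^ 2 = (t + σ) ^ 2 := by rw [hx1, hx2]; exact hbase t
  have hrad : radius x1 x2 = t + σ := by rw [radius, hQe, Real.sqrt_sq hts.le]
  rw [hrad, hQe]
  rw [rpow_sq_quarter hts, rpow_sq_m34 hts, rpow_sq_m74 hts, rpow_32 hts]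
  rw [ptp1_comm hsa, ptp2_comm hsa, p1p2_comm hsa]
  have hP : pt (pt ua) t x1 x2
      = p1 (p1 ua) t x1 x2 + p2 (p2 ua) t x1 x2 - (pt ub t x1 x2) ^ 2 * pt ua t x1 x2 := by
    have h := hpde t x1 x2 ht
    linarith [h]
  rw [hP]
  set b := (t + σ) ^ ((1:ℝ)/2) with hbdef
  have hb2 : b ^ 2 = t + σ := rpow_half_sq hts
  have hbpos : 0 < b := Real.rpow_pos_of_pos hts _
  rw [hx1, hx2, ← hb2]
  clear_value b G
  clear hpde hbase hVeqG hEv huaD hptD hp1D hp2D hQd hQMd hQPd hy1d hy2d hGD hray cT hptG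
  clear hA1 c1 hp1G hA2 c2 hp2G hV hsa hsb hqneP hGdef hQe hrad hP hbdef
  generalize ua t (b^2*ω1) (b^2*ω2) = A0
  generalize pt ua t (b^2*ω1) (b^2*ω2) = AT
  generalize p1 ua t (b^2*ω1) (b^2*ω2) = A1
  generalize p2 ua t (b^2*ω1) (b^2*ω2) = A2
  generalize p1 (p1 ua) t (b^2*ω1) (b^2*ω2) = A11
  generalize p2 (p2 ua) t (b^2*ω1) (b^2*ω2) = A22
  generalize p2 (p1 ua) t (b^2*ω1) (b^2*ω2) = A12
  generalize p1 (pt ua) t (b^2*ω1) (b^2*ω2) = AT1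
  generalize p2 (pt ua) t (b^2*ω1) (b^2*ω2) = AT2
  generalize pt ub t (b^2*ω1) (b^2*ω2) = BT
  generalize Uop ua t (b^2*ω1) (b^2*ω2) = UA
  generalize Uop ub t (b^2*ω1) (b^2*ω2) = UB
  have hbm : b * b⁻¹ = 1 := mul_inv_cancel₀ (ne_of_gt hbpos)
  linear_combination ((1/2 : ℝ) * b⁻¹ * ω2 * A2 + (-1/2 : ℝ) * b⁻¹ * ω2 ^ 3 * A2 + (1/2 : ℝ) * b⁻¹ * ω1 * A1 + (-1/2 : ℝ) * b⁻¹ * ω1 * ω2 ^ 2 * A1 + (-1/2 : ℝ) * b⁻¹ * ω1 ^ 2 * ω2 * A2 + (-1/2 : ℝ) * b⁻¹ * ω1 ^ 3 * A1 + (3/8 : ℝ) * b⁻¹ ^ 3 * ω2 ^ 4 * A0 + (3/4 : ℝ) * b⁻¹ ^ 3 * ω1 ^ 2 * ω2 ^ 2 * A0 + (3/8 : ℝ) * b⁻¹ ^ 3 * ω1 ^ 4 * A0 + (-1/2 : ℝ) * b * ω2 ^ 2 * A11 + (1 : ℝ) * b * ω1 * ω2 * A12 + (-1/2 : ℝ)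 * b * ω1 ^ 2 * A22 + (1/2 : ℝ) * b * b⁻¹ ^ 2 * ω2 * A2 + (-1/2 : ℝ) * b * b⁻¹ ^ 2 * ω2 ^ 3 * A2 + (1/2 : ℝ) * b * b⁻¹ ^ 2 * ω1 * A1 + (-1/2 : ℝ) * b * b⁻¹ ^ 2 * ω1 * ω2 ^ 2 * A1 + (-1/2 : ℝ) * b * b⁻¹ ^ 2 * ω1 ^ 2 * ω2 * A2 + (-1/2 : ℝ) * b * b⁻¹ ^ 2 * ω1 ^ 3 * A1 + (3/8 : ℝ) * b * b⁻¹ ^ 4 * ω2 ^ 4 * A0 + (3/4 : ℝ) * b * b⁻¹ ^ 4 * ω1 ^ 2 * ω2 ^ 2 * A0 + (3/8 : ℝ) * b * b⁻¹ ^ 4 * ω1 ^ 4 * A0 + (-1/2 : ℝ) * b ^ 2 * b⁻¹ * ω2 ^ 2 * A11 + (1 : ℝ) * b ^ 2 * b⁻¹ * ω1 * ω2 * A12 + (-1/2 : ℝ) * b ^ 2 * b⁻¹ * ω1 ^ 2 * A22 + (3/8 : ℝ) * b ^ 2 * b⁻¹ ^ 5 * ω2 ^ 4 * A0 + (3/4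 : ℝ) * b ^ 2 * b⁻¹ ^ 5 * ω1 ^ 2 * ω2 ^ 2 * A0 + (3/8 : ℝ) * b ^ 2 * b⁻¹ ^ 5 * ω1 ^ 4 * A0 + (-1/2 : ℝ) * b ^ 3 * b⁻¹ ^ 2 * ω2 ^ 2 * A11 + (1 : ℝ) * b ^ 3 * b⁻¹ ^ 2 * ω1 * ω2 * A12 + (-1/2 : ℝ) * b ^ 3 * b⁻¹ ^ 2 * ω1 ^ 2 * A22 + (3/8 : ℝ) * b ^ 3 * b⁻¹ ^ 6 * ω2 ^ 4 * A0 + (3/4 : ℝ) * b ^ 3 * b⁻¹ ^ 6 * ω1 ^ 2 * ω2 ^ 2 * A0 + (3/8 : ℝ) * b ^ 3 * b⁻¹ ^ 6 * ω1 ^ 4 * A0) * hbm + ((-1/2 : ℝ) * b⁻¹ * ω2 * A2 + (-1/2 : ℝ) * b⁻¹ * ω1 * A1 + (1/8 : ℝ) * b⁻¹ ^ 3 * A0 + (3/8 : ℝ) * b⁻¹ ^ 3 * ω2 ^ 2 * A0 + (3/8 : ℝ) * b⁻¹ ^ 3 * ω1 ^ 2 * A0 + (-1/2 : ℝ) * b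 * A22 + (-1/2 : ℝ) * b * A11) * hω


/-- the profile equations for `V = (V₁,V₂)`. -/
theorem profile_equations (u1 u2 : ℝ → ℝ → ℝ → ℝ)
    (hs1 : Smooth3 u1) (hs2 : Smooth3 u2)
    (hpde1 : ∀ t x1 x2 : ℝ, 0 < t →
      dAlembert u1 t x1 x2 = -(pt u2 t x1 x2) ^ 2 * pt u1 t x1 x2)
    (hpde2 : ∀ t x1 x2 : ℝ, 0 < t →
      dAlembert u2 t x1 x2 = -(pt u1 t x1 x2) ^ 2 * pt u2 t x1 x2) :
    ∀ σ ω1 ω2 : ℝ, ω1 ^ 2 + ω2 ^ 2 = 1 → ∀ t : ℝ, 0 < t → 0 < t + σ →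
      HasDerivAt (fun s => Vop u1 s σ ω1 ω2)
        (-1 / (2 * t) * Vop u1 t σ ω1 ω2 * (Vop u2 t σ ω1 ω2) ^ 2
          + Kfun u1 u2 t σ ω1 ω2) t ∧
      HasDerivAt (fun s => Vop u2 s σ ω1 ω2)
        (-1 / (2 * t) * (Vop u1 t σ ω1 ω2) ^ 2 * Vop u2 t σ ω1 ω2
          + Kfun u2 u1 t σ ω1 ω2) t := by
  intro σ ω1 ω2 hω t ht hts
  constructor
  · exact aux_profile u1 u2 hs1 hs2 hpde1 σ ω1 ω2 hω t ht hts
  · have h := aux_profile u2 u1 hs2 hs1 hpde2 σ ω1 ω2 hω t ht hts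
    have he : (-1 / (2 * t) * Vop u2 t σ ω1 ω2 * (Vop u1 t σ ω1 ω2) ^ 2
        + Kfun u2 u1 t σ ω1 ω2)
        = (-1 / (2 * t) * (Vop u1 t σ ω1 ω2) ^ 2 * Vop u2 t σ ω1 ω2
        + Kfun u2 u1 t σ ω1 ω2) := by ring
    exact he ▸ h

end
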